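/- Let $\mathcal{W} = \{\pm 1\}^n \rtimes S_n$ act on the Laurent polynomial ring $\mathbb{Z}[x_1^{\pm 1},\dots,x_n^{\pm 1}]$, where $S_n$ permutes the variables and the $i$-th sign factor inverts $x_i$. Then the ring of invariants is the polynomial ring $\mathbb{Z}[\sigma_1,\dots,\sigma_n]$, where $\sigma_i$ is the $i$-th elementary symmetric polynomial in the elements $\varphi_j = x_j + x_j^{-1}$; in particular the $\sigma_i$ are algebraically independent over $\mathbb{Z}$. -/

import Mathlib

open Finset

/-- The monomial `x^v` in the group algebra `ℤ[ℤⁿ] = ℤ[x₁^{±1},…,xₙ^{±1}]`. -/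
noncomputable def mono (n : ℕ) (v : Fin n → ℤ) : AddMonoidAlgebra ℤ (Fin n → ℤ) :=
  AddMonoidAlgebra.single v 1

/-- The element `φⱼ = xⱼ + xⱼ⁻¹`. -/
noncomputable def phiB (n : ℕ) (j : Fin n) : AddMonoidAlgebra ℤ (Fin n → ℤ) :=
  mono n (Pi.single j 1) + mono n (-Pi.single j 1)

/-- The `i`-th elementary symmetric function `σᵢ` in `φ₁,…,φₙ` (here `i : Fin n` corresponds
to the classical index `i+1 ∈ {1,…,n}`). -/
noncomputable def sigmaB (n : ℕ) (i : Fin n) : AddMonoidAlgebra ℤ (Fin n → ℤ) :=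
  ∑ A ∈ Finset.powersetCard (i.1 + 1) (Finset.univ : Finset (Fin n)), ∏ j ∈ A, phiB n j

namespace BnAux

open MvPolynomial

variable (n : ℕ)

/-- The signed permutation `v ↦ (i ↦ εᵢ · v (π i))` as an additive monoid hom. -/
def sp (ε : Fin n → ℤˣ) (π : Equiv.Perm (Fin n)) : (Fin n → ℤ) →+ (Fin n → ℤ) where
  toFun v := fun i => (ε i : ℤ) * v (π i)
  map_zero' := by funext i; simp
  map_add' v w := by funext i; simp [mul_add]

/-- The induced algebra automorphism-ish endomorphism of the group algebra. -/
noncomputable def T (ε : Fin n → ℤˣ) (π : Equiv.Perm (Fin n)) :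
    AddMonoidAlgebra ℤ (Fin n → ℤ) →ₐ[ℤ] AddMonoidAlgebra ℤ (Fin n → ℤ) :=
  AddMonoidAlgebra.mapDomainAlgHom ℤ ℤ (sp n ε π)

lemma T_apply (ε : Fin n → ℤˣ) (π : Equiv.Perm (Fin n)) (p : AddMonoidAlgebra ℤ (Fin n → ℤ)) :
    (T n ε π p).coeff = Finsupp.mapDomain (fun v : Fin n → ℤ => fun i => (ε i : ℤ) * v (π i)) p.coeff := rfl

lemma sp_single (ε : Fin n → ℤˣ) (π : Equiv.Perm (Fin n)) (j : Fin n) :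
    sp n ε π (Pi.single j 1) = (ε (π.symm j) : ℤ) • Pi.single (π.symm j) (1:ℤ) := by
  funext i
  simp only [sp, AddMonoidHom.coe_mk, ZeroHom.coe_mk, Pi.smul_apply, smul_eq_mul]
  by_cases hi : i = π.symm j
  · subst hi
    simp [Pi.single_apply]
  · have h1 : π i ≠ j := fun h => hi (by simp [← h])
    simp [Pi.single_apply, h1, Ne.symm hi]

lemma T_mono (ε : Fin n → ℤˣ) (π : Equiv.Perm (Fin n)) (v : Fin n → ℤ) :
    T n ε π (mono n v) = mono n (sp n ε π v) := by
  simp [T, mono,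
    AddMonoidAlgebra.mapDomain_single]

lemma T_phi (ε : Fin n → ℤˣ) (π : Equiv.Perm (Fin n)) (j : Fin n) :
    T n ε π (phiB n j) = phiB n (π.symm j) := by
  rw [phiB, map_add, T_mono, T_mono, map_neg, sp_single]
  rcases Int.units_eq_one_or (ε (π.symm j)) with h | h <;> rw [h] <;> simp [phiB]
  · rw [add_comm]

/-- The algebra map `ℤ[X₁,…,Xₙ] → ℤ[ℤⁿ]`, `Xⱼ ↦ φⱼ`. -/
noncomputable def Phi : MvPolynomial (Fin n) ℤ →ₐ[ℤ] AddMonoidAlgebra ℤ (Fin n → ℤ) :=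
  MvPolynomial.aeval (phiB n)

lemma sigmaB_eq (i : Fin n) : sigmaB n i = Phi n (esymm (Fin n) ℤ (i.1 + 1)) := by
  rw [esymm, sigmaB, map_sum]
  refine Finset.sum_congr rfl fun A _ => ?_
  rw [map_prod]
  exact Finset.prod_congr rfl fun j _ => by simp [Phi]

lemma T_comp_Phi (ε : Fin n → ℤˣ) (π : Equiv.Perm (Fin n)) :
    (T n ε π).comp (Phi n) = (Phi n).comp (rename ⇑π.symm) := by
  apply MvPolynomial.algHom_ext
  intro j
  simp only [AlgHom.comp_apply, Phi, aeval_X, rename_X]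
  exact T_phi n ε π j

lemma T_sigmaB (ε : Fin n → ℤˣ) (π : Equiv.Perm (Fin n)) (i : Fin n) :
    T n ε π (sigmaB n i) = sigmaB n i := by
  rw [sigmaB_eq]
  have := congrArg (fun f => (f : MvPolynomial (Fin n) ℤ →ₐ[ℤ] _) (esymm (Fin n) ℤ (i.1+1)))
    (T_comp_Phi n ε π)
  simp only [AlgHom.comp_apply] at this
  rw [this, rename_esymm, ← sigmaB_eq]

lemma phi_mul_apply (j : Fin n) (f : AddMonoidAlgebra ℤ (Fin n → ℤ)) (w : Fin n → ℤ) :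
    (phiB n j * f).coeff w = f.coeff (w - Pi.single j 1) + f.coeff (w + Pi.single j 1) := by
  rw [phiB, add_mul, AddMonoidAlgebra.coeff_add, Finsupp.add_apply, mono, mono, AddMonoidAlgebra.coeff_single_mul_apply,
    AddMonoidAlgebra.coeff_single_mul_apply]
  rw [one_mul, one_mul, neg_neg, ← sub_eq_neg_add, add_comm (Pi.single j (1:ℤ)) w]

/-- Box bound and leading coefficient for `∏ φⱼ^{bⱼ}`. -/
lemma prod_phi_pow (N : ℕ) : ∀ b : Fin n → ℕ, (∑ j, b j) = N →
    ((∏ j, phiB n j ^ b j).coeff (fun j => (b j : ℤ)) = 1 ∧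
     ∀ w : Fin n → ℤ, (∏ j, phiB n j ^ b j).coeff w ≠ 0 → ∀ j, |w j| ≤ (b j : ℤ)) := by
  induction N with
  | zero =>
    intro b hb
    have hb0 : ∀ j, b j = 0 := by
      intro j
      exact Finset.sum_eq_zero_iff.1 hb j (Finset.mem_univ j)
    have : (∏ j, phiB n j ^ b j) = 1 := by
      rw [Finset.prod_eq_one]
      intro j _
      rw [hb0 j, pow_zero]
    rw [this]
    constructor
    · rw [AddMonoidAlgebra.one_def, AddMonoidAlgebra.coeff_single, Finsupp.single_apply, if_pos]
      funext j; rw [hb0 j]; rfl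
    · intro w hw j
      rw [AddMonoidAlgebra.one_def, AddMonoidAlgebra.coeff_single, Finsupp.single_apply] at hw
      split_ifs at hw with h
      · rw [hb0 j, ← h]; simp
      · exact absurd rfl hw
  | succ N ih =>
    intro b hb
    have hex : ∃ j, b j ≠ 0 := by
      by_contra h
      push_neg at h
      rw [Finset.sum_eq_zero (fun j _ => h j)] at hb
      exact Nat.succ_ne_zero N hb.symm
    obtain ⟨j, hj⟩ := hex
    set b' : Fin n → ℕ := Function.update b j (b j - 1) with hb'
    have hbj : 1 ≤ b j := Nat.one_le_iff_ne_zero.2 hj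
    have hA : b j + ∑ i ∈ Finset.univ.erase j, b i = N + 1 := by
      rw [Finset.add_sum_erase Finset.univ b (Finset.mem_univ j), hb]
    have hC : ∑ i ∈ Finset.univ.erase j, b' i = ∑ i ∈ Finset.univ.erase j, b i :=
      Finset.sum_congr rfl fun i hi => by
        rw [hb', Function.update_of_ne (Finset.ne_of_mem_erase hi)]
    have hsum' : (∑ i, b' i) = N := by
      rw [← Finset.add_sum_erase Finset.univ b' (Finset.mem_univ j), hC, hb',
          Function.update_self]
      omega
    obtain ⟨ih1, ih2⟩ := ih b' hsum'
    have hsplit : (∏ i, phiB n i ^ b i) = phiB n j * ∏ i, phiB n i ^ b' i := by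
      have e1 : ∏ i, phiB n i ^ b i
          = phiB n j ^ b j * ∏ i ∈ Finset.univ.erase j, phiB n i ^ b i :=
        (Finset.mul_prod_erase Finset.univ _ (Finset.mem_univ j)).symm
      have e2 : ∏ i, phiB n i ^ b' i
          = phiB n j ^ (b j - 1) * ∏ i ∈ Finset.univ.erase j, phiB n i ^ b i := by
        rw [← Finset.mul_prod_erase Finset.univ (fun i => phiB n i ^ b' i) (Finset.mem_univ j)]
        congr 1
        · rw [hb', Function.update_self]
        · exact Finset.prod_congr rfl fun i hi => by
            rw [hb', Function.update_of_ne (Finset.ne_of_mem_erase hi)]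
      have hbb : b j = (b j - 1) + 1 := by omega
      rw [e1, e2, ← mul_assoc, ← pow_succ', ← hbb]
    have key : ∀ w : Fin n → ℤ, (∏ i, phiB n i ^ b i).coeff w =
        (∏ i, phiB n i ^ b' i).coeff (w - Pi.single j 1) + (∏ i, phiB n i ^ b' i).coeff (w + Pi.single j 1) := by
      intro w
      rw [hsplit, phi_mul_apply]
    -- cast values of b'
    have hb'c : ∀ i, ((b' i : ℤ)) = if i = j then (b j : ℤ) - 1 else (b i : ℤ) := by
      intro i
      by_cases hi : i = j
      · subst hi; simp [hb', Function.update_self]; omega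
      · rw [if_neg hi, hb', Function.update_of_ne hi]
    constructor
    · rw [key]
      have h1 : (fun i => (b i : ℤ)) - Pi.single j 1 = fun i => (b' i : ℤ) := by
        funext i
        rw [Pi.sub_apply, hb'c i, Pi.single_apply]
        split_ifs with hi
        · subst hi; ring
        · ring
      have h2 : (∏ i, phiB n i ^ b' i).coeff ((fun i => (b i : ℤ)) + Pi.single j 1) = 0 := by
        by_contra h
        have := ih2 _ h j
        rw [hb'c j, if_pos rfl] at this
        rw [Pi.add_apply, Pi.single_apply, if_pos rfl] at this
        have : |(b j : ℤ) + 1| = (b j : ℤ) + 1 := abs_of_nonneg (by positivity)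
        omega
      rw [h1, ih1, h2, add_zero]
    · intro w hw i
      rw [key] at hw
      have : (∏ i, phiB n i ^ b' i).coeff (w - Pi.single j 1) ≠ 0 ∨
             (∏ i, phiB n i ^ b' i).coeff (w + Pi.single j 1) ≠ 0 := by
        by_contra h
        push_neg at h
        rw [h.1, h.2, add_zero] at hw
        exact hw rfl
      rcases this with h | h
      · have := ih2 _ h i
        rw [hb'c i] at this
        rw [Pi.sub_apply, Pi.single_apply] at this
        split_ifs at this with hi
        · subst hi
          rcases abs_le.1 this with ⟨h1, h2⟩
          rw [abs_le]; omega
        · simpa using this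
      · have := ih2 _ h i
        rw [hb'c i] at this
        rw [Pi.add_apply, Pi.single_apply] at this
        split_ifs at this with hi
        · subst hi
          rcases abs_le.1 this with ⟨h1, h2⟩
          rw [abs_le]; omega
        · simpa using this

lemma prod_phi_coeff (b : Fin n → ℕ) : (∏ j, phiB n j ^ b j).coeff (fun j => (b j : ℤ)) = 1 :=
  (prod_phi_pow n _ b rfl).1

lemma prod_phi_box {b : Fin n → ℕ} {w : Fin n → ℤ}
    (hw : (∏ j, phiB n j ^ b j).coeff w ≠ 0) (j : Fin n) : |w j| ≤ (b j : ℤ) :=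
  (prod_phi_pow n _ b rfl).2 w hw j

lemma T_prod_phi (ε : Fin n → ℤˣ) (b : Fin n → ℕ) :
    T n ε 1 (∏ j, phiB n j ^ b j) = ∏ j, phiB n j ^ b j := by
  rw [map_prod]
  refine Finset.prod_congr rfl fun j _ => ?_
  rw [map_pow, T_phi]
  rfl

lemma sp_invol (ε : Fin n → ℤˣ) (v : Fin n → ℤ) : sp n ε 1 (sp n ε 1 v) = v := by
  funext i
  simp only [sp, AddMonoidHom.coe_mk, ZeroHom.coe_mk, Equiv.Perm.coe_one, id_eq]
  have h1 : (ε i : ℤ) * (ε i : ℤ) = 1 := by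
    rcases Int.units_eq_one_or (ε i) with h | h <;> rw [h] <;> norm_num
  rw [← mul_assoc, h1, one_mul]

lemma apply_sp (ε : Fin n → ℤˣ) (p : AddMonoidAlgebra ℤ (Fin n → ℤ))
    (hinv : T n ε 1 p = p) (w : Fin n → ℤ) : p.coeff (sp n ε 1 w) = p.coeff w := by
  have hinj : Function.Injective ⇑(sp n ε 1) :=
    Function.Involutive.injective (sp_invol n ε)
  conv_lhs => rw [← hinv]
  exact Finsupp.mapDomain_apply hinj p.coeff w

lemma coeff_abs (p : AddMonoidAlgebra ℤ (Fin n → ℤ))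
    (hinv : ∀ ε, T n ε 1 p = p) (w : Fin n → ℤ) :
    p.coeff w = p.coeff (fun j => ((w j).natAbs : ℤ)) := by
  set ε : Fin n → ℤˣ := fun i => if w i < 0 then -1 else 1 with hε
  have hfw : sp n ε 1 w = fun j => ((w j).natAbs : ℤ) := by
    funext i
    simp only [sp, AddMonoidHom.coe_mk, ZeroHom.coe_mk, Equiv.Perm.coe_one, id_eq]
    rw [Nat.cast_natAbs, Int.cast_id]
    by_cases h : w i < 0
    · simp only [hε, if_pos h, Units.val_neg, Units.val_one]
      rw [abs_of_neg h]; ring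
    · simp only [hε, if_neg h, Units.val_one, one_mul]
      rw [abs_of_nonneg (le_of_not_gt h)]
  rw [← hfw]
  exact (apply_sp n ε p (hinv ε) w).symm

lemma Phi_monomial (b : Fin n →₀ ℕ) (c : ℤ) :
    Phi n (MvPolynomial.monomial b c) = c • ∏ j, phiB n j ^ b j := by
  rw [Phi, aeval_monomial, Finsupp.prod_fintype _ _ (fun i => pow_zero _),
    ← Algebra.smul_def]

lemma Phi_injective : Function.Injective (Phi n) := by
  rw [injective_iff_map_eq_zero]
  intro P hP
  by_contra hP0
  obtain ⟨b, hbmem, hbmax⟩ := Finset.exists_max_image P.support (fun t => ∑ j, t j)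
    (MvPolynomial.support_nonempty.2 hP0)
  have hsum : Phi n P = ∑ t ∈ P.support, (MvPolynomial.coeff t P) • ∏ j, phiB n j ^ t j := by
    conv_lhs => rw [P.as_sum, map_sum]
    exact Finset.sum_congr rfl fun t _ => Phi_monomial n t _
  have hev := congrArg (fun q : AddMonoidAlgebra ℤ (Fin n → ℤ) =>
    q.coeff (fun j => ((b j : ℕ) : ℤ))) hsum
  rw [hP] at hev
  rw [AddMonoidAlgebra.coeff_sum, Finsupp.finset_sum_apply] at hev
  simp only [AddMonoidAlgebra.coeff_zero, Finsupp.coe_zero, Pi.zero_apply] at hev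
  rw [Finset.sum_eq_single b] at hev
  · rw [AddMonoidAlgebra.coeff_smul, Finsupp.smul_apply, prod_phi_coeff, smul_eq_mul, mul_one] at hev
    exact (MvPolynomial.mem_support_iff.1 hbmem) hev.symm
  · intro t ht htb
    rw [AddMonoidAlgebra.coeff_smul, Finsupp.smul_apply, smul_eq_mul]
    have hz : (∏ j, phiB n j ^ t j).coeff (fun j => ((b j : ℕ) : ℤ)) = 0 := by
      by_contra h
      have hle : ∀ j, b j ≤ t j := by
        intro j
        have := prod_phi_box n h j
        rw [abs_of_nonneg (by positivity)] at this
        exact_mod_cast this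
      have hsums : (∑ j, b j) = ∑ j, t j :=
        le_antisymm (Finset.sum_le_sum fun j _ => hle j) (hbmax t ht)
      have := (Finset.sum_eq_sum_iff_of_le (fun j _ => hle j)).1 hsums
      exact htb (Finsupp.ext fun j => (this j (Finset.mem_univ j)).symm)
    rw [hz, mul_zero]
  · intro h; exact absurd hbmem h

/-- total degree-like level of an exponent vector -/
def level (w : Fin n → ℤ) : ℕ := ∑ j, (w j).natAbs

lemma signInv_mem (K : ℕ) : ∀ (M : ℕ) (p : AddMonoidAlgebra ℤ (Fin n → ℤ)),
    (∀ ε, T n ε 1 p = p) →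
    (∀ w ∈ p.coeff.support, level n w ≤ K) →
    ((p.coeff.support.filter (fun w => level n w = K)).card ≤ M) →
    p ∈ (Phi n).range := by
  induction K using Nat.strong_induction_on with
  | _ K ihK =>
  intro M
  induction M with
  | zero =>
    intro p hinv hsup hcard
    rcases eq_or_ne p 0 with rfl | hp0
    · exact zero_mem _
    have hfe : p.coeff.support.filter (fun w => level n w = K) = ∅ :=
      Finset.card_eq_zero.1 (Nat.le_zero.1 hcard)
    rcases Nat.eq_zero_or_pos K with rfl | hK
    · exfalso
      obtain ⟨w, hw⟩ := Finsupp.support_nonempty_iff.2 (AddMonoidAlgebra.coeff_eq_zero.not.2 hp0)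
      have : w ∈ p.coeff.support.filter (fun w => level n w = 0) :=
        Finset.mem_filter.2 ⟨hw, Nat.le_zero.1 (hsup w hw)⟩
      rw [hfe] at this
      exact absurd this (Finset.notMem_empty w)
    · refine ihK (K-1) (by omega) _ p hinv ?_ le_rfl
      intro w hw
      have h1 := hsup w hw
      have h2 : level n w ≠ K := by
        intro h
        have : w ∈ p.coeff.support.filter (fun w => level n w = K) :=
          Finset.mem_filter.2 ⟨hw, h⟩
        rw [hfe] at this
        exact absurd this (Finset.notMem_empty w)
      omega
  | succ M ihM =>
    intro p hinv hsup hcard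
    rcases Finset.eq_empty_or_nonempty (p.coeff.support.filter (fun w => level n w = K)) with
      hfe | ⟨b, hb⟩
    · exact ihM p hinv hsup (by rw [hfe]; simp)
    have hbsup : b ∈ p.coeff.support := (Finset.mem_filter.1 hb).1
    have hbK : level n b = K := (Finset.mem_filter.1 hb).2
    set a : Fin n → ℕ := fun j => (b j).natAbs with ha
    set c : ℤ := p.coeff b with hc
    set P : AddMonoidAlgebra ℤ (Fin n → ℤ) := ∏ j, phiB n j ^ a j with hP
    set p' := p - c • P with hp'
    have hPinv : ∀ ε, T n ε 1 P = P := fun ε => T_prod_phi n ε a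
    have hPval : ∀ w, (∀ j, (w j).natAbs = a j) → P.coeff w = 1 := by
      intro w hw
      have h1 : (fun j => ((w j).natAbs : ℤ)) = fun j => (a j : ℤ) :=
        funext fun j => by rw [hw j]
      rw [coeff_abs n P hPinv w, h1]
      exact prod_phi_coeff n a
    have hpval : ∀ w, (∀ j, (w j).natAbs = a j) → p.coeff w = c := by
      intro w hw
      have h1 : (fun j => ((w j).natAbs : ℤ)) = fun j => ((b j).natAbs : ℤ) :=
        funext fun j => by rw [hw j]
      rw [coeff_abs n p hinv w, h1, ← coeff_abs n p hinv b]
    have hinv' : ∀ ε, T n ε 1 p' = p' := by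
      intro ε
      rw [hp', map_sub, hinv, map_smul, hPinv]
    have hPsup : ∀ w ∈ P.coeff.support, level n w ≤ K := by
      intro w hw
      rw [Finsupp.mem_support_iff] at hw
      rw [← hbK]
      refine Finset.sum_le_sum fun j _ => ?_
      have h2 := prod_phi_box n (b := a) hw j
      rw [Int.abs_eq_natAbs] at h2
      exact_mod_cast h2
    have hsup' : ∀ w ∈ p'.coeff.support, level n w ≤ K := by
      intro w hw
      rcases Finset.mem_union.1 (Finsupp.support_sub (by exact hw)) with h | h
      · exact hsup w h
      · exact hPsup w (Finsupp.support_smul h)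
    have hsubset : p'.coeff.support.filter (fun w => level n w = K) ⊆
        (p.coeff.support.filter (fun w => level n w = K)).erase b := by
      intro w hw
      rcases Finset.mem_filter.1 hw with ⟨hws, hwK⟩
      rw [Finsupp.mem_support_iff] at hws
      have hp'w : p'.coeff w = p.coeff w - c * P.coeff w := by
        rw [hp', AddMonoidAlgebra.coeff_sub, Finsupp.sub_apply, AddMonoidAlgebra.coeff_smul, Finsupp.smul_apply, smul_eq_mul]
      by_cases hPw : P.coeff w = 0
      · rw [hPw, mul_zero, sub_zero] at hp'w
        refine Finset.mem_erase.2 ⟨?_, Finset.mem_filter.2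
          ⟨Finsupp.mem_support_iff.2 (by rw [← hp'w]; exact hws), hwK⟩⟩
        rintro rfl
        have h3 : P.coeff w = 1 := hPval w (fun j => rfl)
        rw [h3] at hPw
        exact one_ne_zero hPw
      · exfalso
        have hle : ∀ j, (w j).natAbs ≤ a j := by
          intro j
          have h2 := prod_phi_box n (b := a) hPw j
          rw [Int.abs_eq_natAbs] at h2
          exact_mod_cast h2
        have hsums : (∑ j, (w j).natAbs) = ∑ j, a j := by
          have h1 : level n w = K := hwK
          have h2 : level n b = K := hbK
          unfold level at h1 h2
          exact h1.trans h2.symm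
        have heq : ∀ j, (w j).natAbs = a j := fun j =>
          (Finset.sum_eq_sum_iff_of_le (fun j _ => hle j)).1 hsums j (Finset.mem_univ j)
        have : p'.coeff w = 0 := by
          rw [hp'w, hpval w heq, hPval w heq, mul_one, sub_self]
        exact hws this
    have hcard' : (p'.coeff.support.filter (fun w => level n w = K)).card ≤ M := by
      have h1 := Finset.card_le_card hsubset
      have h2 := Finset.card_erase_of_mem hb
      omega
    have hp'mem : p' ∈ (Phi n).range := ihM p' hinv' hsup' hcard'
    have hPmem : P ∈ (Phi n).range := by
      refine ⟨MvPolynomial.monomial (Finsupp.equivFunOnFinite.symm a) 1, ?_⟩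
      show Phi n _ = P
      rw [Phi_monomial, one_smul]
      rfl
    have hsplit : p = p' + c • P := by rw [hp']; ring
    rw [hsplit]
    exact add_mem hp'mem (Subalgebra.smul_mem _ hPmem c)

lemma signInv_mem' (p : AddMonoidAlgebra ℤ (Fin n → ℤ)) (hinv : ∀ ε, T n ε 1 p = p) :
    p ∈ (Phi n).range :=
  signInv_mem n (p.coeff.support.sup (level n)) _ p hinv (fun _ hw => Finset.le_sup hw) le_rfl

lemma aeval_sigmaB_eq : (MvPolynomial.aeval (sigmaB n) : MvPolynomial (Fin n) ℤ →ₐ[ℤ] _)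
    = (Phi n).comp (MvPolynomial.aeval (fun i : Fin n => esymm (Fin n) ℤ (i.1 + 1))) := by
  apply MvPolynomial.algHom_ext
  intro i
  rw [aeval_X, AlgHom.comp_apply, aeval_X, ← sigmaB_eq]

lemma esymm_aeval_injective :
    Function.Injective (MvPolynomial.aeval (fun i : Fin n => esymm (Fin n) ℤ (i.1 + 1)) :
      MvPolynomial (Fin n) ℤ →ₐ[ℤ] MvPolynomial (Fin n) ℤ) := by
  intro x y hxy
  apply esymmAlgHom_fin_injective ℤ (le_refl n)
  apply Subtype.ext
  rw [esymmAlgHom_apply, esymmAlgHom_apply]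
  exact hxy

end BnAux

open BnAux MvPolynomial

/-- Multiplicative invariants of the lattice `Bₙ = ℤⁿ` under the Weyl group
`W = {±1}ⁿ ⋊ Sₙ` of type `Bₙ`: a Laurent polynomial `p ∈ ℤ[x₁^{±1},…,xₙ^{±1}]` is invariant
under all signed permutations of the variables iff it lies in the subalgebra generated by the
elementary symmetric functions `σ₁,…,σₙ` of `φⱼ = xⱼ + xⱼ⁻¹`; moreover the `σᵢ` are
algebraically independent over `ℤ`. -/
theorem Bn_weyl_invariants (n : ℕ) :
    (∀ p : AddMonoidAlgebra ℤ (Fin n → ℤ),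
      (∀ (ε : Fin n → ℤˣ) (π : Equiv.Perm (Fin n)),
        Finsupp.mapDomain (fun v : Fin n → ℤ => fun i => (ε i : ℤ) * v (π i)) p.coeff = p.coeff) ↔
      p ∈ Algebra.adjoin ℤ (Set.range (sigmaB n))) ∧
    AlgebraicIndependent ℤ (sigmaB n) := by
  have hadj : Algebra.adjoin ℤ (Set.range (sigmaB n))
      = (MvPolynomial.aeval (sigmaB n) : MvPolynomial (Fin n) ℤ →ₐ[ℤ] _).range := by
    rw [← Algebra.adjoin_range_eq_range_aeval]
  constructor
  · intro p
    constructor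
    · intro h
      have hsign : ∀ ε, T n ε 1 p = p := fun ε => by rw [← AddMonoidAlgebra.coeff_inj, T_apply]; exact h ε 1
      obtain ⟨P, hPp'⟩ := signInv_mem' n p hsign
      have hPp : Phi n P = p := hPp'
      have hsym : P.IsSymmetric := by
        intro σ
        apply Phi_injective n
        have h1 : (T n 1 σ.symm).comp (Phi n) = (Phi n).comp (rename ⇑σ) := by
          have := T_comp_Phi n 1 σ.symm
          rwa [Equiv.symm_symm] at this
        have h2 : Phi n (rename (⇑σ) P) = T n 1 σ.symm (Phi n P) := by
          rw [← AlgHom.comp_apply, ← h1, AlgHom.comp_apply]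
        have h3 : T n 1 σ.symm p = p := by rw [← AddMonoidAlgebra.coeff_inj, T_apply]; exact h 1 σ.symm
        rw [h2, hPp, h3]
      obtain ⟨Q, hQ⟩ := (esymmAlgHom_fin_bijective ℤ n).2 ⟨P, hsym⟩
      have hPQ : MvPolynomial.aeval (fun i : Fin n => esymm (Fin n) ℤ (i.1 + 1)) Q = P := by
        have := congrArg Subtype.val hQ
        rwa [esymmAlgHom_apply] at this
      rw [hadj, AlgHom.mem_range]
      refine ⟨Q, ?_⟩
      rw [aeval_sigmaB_eq, AlgHom.comp_apply, hPQ]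
      exact hPp
    · intro hp ε π
      rw [← T_apply, AddMonoidAlgebra.coeff_inj]
      induction hp using Algebra.adjoin_induction with
      | mem x hx =>
        obtain ⟨i, rfl⟩ := hx
        exact T_sigmaB n ε π i
      | algebraMap r => exact (T n ε π).commutes r
      | add x y _ _ hx hy => rw [map_add, hx, hy]
      | mul x y _ _ hx hy => rw [map_mul, hx, hy]
  · rw [algebraicIndependent_iff_injective_aeval, aeval_sigmaB_eq, AlgHom.coe_comp]
    exact (Phi_injective n).comp (esymm_aeval_injective n)
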